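/- Let E be p₀-convex with constant K₀ and F be p₁-convex with constant K₁ (Banach ideal spaces), and 0 < θ < 1. Then the Calderón space E^{1-θ}F^θ is p-convex with constant at most K₀^{1-θ}K₁^θ, where 1/p = (1-θ)/p₀ + θ/p₁. -/

import Mathlib

open MeasureTheory

/-- A Banach ideal space on a measure space: a linear subspace of measurable
functions (mod null sets) with a complete lattice norm having the ideal property,
and a weak unit (saturation). -/
structure IdealSpace {α : Type*} [MeasurableSpace α] (μ : Measure α) where
  carrier : Set (α → ℝ)
  norm : (α → ℝ) → ℝ
  zero_mem : (0 : α → ℝ) ∈ carrier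
  add_mem : ∀ {f g : α → ℝ}, f ∈ carrier → g ∈ carrier → f + g ∈ carrier
  smul_mem : ∀ (c : ℝ) {f : α → ℝ}, f ∈ carrier → c • f ∈ carrier
  norm_nonneg : ∀ f, 0 ≤ norm f
  norm_eq_zero : ∀ f ∈ carrier, (norm f = 0 ↔ f =ᵐ[μ] 0)
  norm_add : ∀ f g, f ∈ carrier → g ∈ carrier → norm (f + g) ≤ norm f + norm g
  norm_smul : ∀ (c : ℝ) (f : α → ℝ), norm (c • f) = |c| * norm f
  ideal_mem : ∀ {f g : α → ℝ}, g ∈ carrier → (∀ᵐ a ∂μ, |f a| ≤ |g a|) → f ∈ carrier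
  ideal_norm : ∀ {f g : α → ℝ}, g ∈ carrier → (∀ᵐ a ∂μ, |f a| ≤ |g a|) → norm f ≤ norm g
  weak_unit : ∃ w ∈ carrier, ∀ᵐ a ∂μ, 0 < w a
  complete : ∀ x : ℕ → α → ℝ, (∀ n, x n ∈ carrier) →
    (∀ ε > 0, ∃ N, ∀ m ≥ N, ∀ n ≥ N, norm (x m - x n) < ε) →
    ∃ f ∈ carrier, Filter.Tendsto (fun n => norm (x n - f)) Filter.atTop (nhds 0)

variable {α : Type*} [MeasurableSpace α] {μ : Measure α}

/-- The pointwise product space E ⊙ F. -/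
def prodSet (E F : IdealSpace μ) : Set (α → ℝ) :=
  {z | ∃ x ∈ E.carrier, ∃ y ∈ F.carrier, z =ᵐ[μ] x * y}

/-- The quasi-norm of the pointwise product space E ⊙ F. -/
noncomputable def prodNorm (E F : IdealSpace μ) (z : α → ℝ) : ℝ :=
  sInf {r | ∃ x ∈ E.carrier, ∃ y ∈ F.carrier, z =ᵐ[μ] x * y ∧ r = E.norm x * F.norm y}

/-- p-convexity with constant K of a normed set of functions. -/
def PConvexOn (S : Set (α → ℝ)) (N : (α → ℝ) → ℝ) (p K : ℝ) : Prop :=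
  ∀ (n : ℕ) (x : Fin n → α → ℝ), (∀ k, x k ∈ S) →
    (fun a => (∑ k, |x k a| ^ p) ^ (1 / p)) ∈ S ∧
    N (fun a => (∑ k, |x k a| ^ p) ^ (1 / p)) ≤ K * (∑ k, N (x k) ^ p) ^ (1 / p)

/-- The Calderón space E^θ F^{1-θ}: membership. -/
def caldSet (θ : ℝ) (E F : IdealSpace μ) : Set (α → ℝ) :=
  {z | ∃ lam > (0 : ℝ), ∃ x ∈ E.carrier, ∃ y ∈ F.carrier, E.norm x ≤ 1 ∧ F.norm y ≤ 1 ∧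
      ∀ᵐ a ∂μ, |z a| ≤ lam * |x a| ^ θ * |y a| ^ (1 - θ)}

/-- The Calderón space norm: the infimum of admissible λ. -/
noncomputable def caldNorm (θ : ℝ) (E F : IdealSpace μ) (z : α → ℝ) : ℝ :=
  sInf {lam | 0 < lam ∧ ∃ x ∈ E.carrier, ∃ y ∈ F.carrier, E.norm x ≤ 1 ∧ F.norm y ≤ 1 ∧
      ∀ᵐ a ∂μ, |z a| ≤ lam * |x a| ^ θ * |y a| ^ (1 - θ)}

theorem holder_interp {ι : Type*} (s : Finset ι) (A B : ι → ℝ)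
    (hA : ∀ i, 0 ≤ A i) (hB : ∀ i, 0 ≤ B i) {t : ℝ} (ht : 0 < t) (ht1 : t < 1) :
    ∑ i ∈ s, A i ^ t * B i ^ (1 - t) ≤ (∑ i ∈ s, A i) ^ t * (∑ i ∈ s, B i) ^ (1 - t) := by
  have ht' : 0 < 1 - t := by linarith
  have hpq : Real.HolderConjugate (1/t) (1/(1-t)) := by
    rw [Real.holderConjugate_iff]
    constructor
    · exact one_lt_one_div ht ht1
    · rw [one_div, one_div, inv_inv, inv_inv]; ring
  have := Real.inner_le_Lp_mul_Lq s (fun i => A i ^ t) (fun i => B i ^ (1-t)) hpq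
  calc ∑ i ∈ s, A i ^ t * B i ^ (1 - t) ≤
      (∑ i ∈ s, |A i ^ t| ^ (1/t)) ^ (1/(1/t)) * (∑ i ∈ s, |B i ^ (1-t)| ^ (1/(1-t))) ^ (1/(1/(1-t))) := this
    _ = (∑ i ∈ s, A i) ^ t * (∑ i ∈ s, B i) ^ (1 - t) := by
        rw [one_div_one_div, one_div_one_div]
        congr 1 <;> congr 1 <;> apply Finset.sum_congr rfl <;> intro i _
        · rw [abs_of_nonneg (Real.rpow_nonneg (hA i) t), one_div,
            Real.rpow_rpow_inv (hA i) ht.ne']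
        · rw [abs_of_nonneg (Real.rpow_nonneg (hB i) _), one_div,
            Real.rpow_rpow_inv (hB i) ht'.ne']

theorem alg1 {p p₀ p₁ θ t : ℝ} (hp0 : 0 < p₀) (hp1 : 0 < p₁)
    (ht0 : t = (1 - θ) * p / p₀) (ht1 : 1 - t = θ * p / p₁)
    {l u v : ℝ} (hl : 0 < l) (hu : 0 ≤ u) (hv : 0 ≤ v) :
    (l * u ^ (1 - θ) * v ^ θ) ^ p = (l ^ p * u ^ p₀) ^ t * (l ^ p * v ^ p₁) ^ (1 - t) := by
  have e1 : p₀ * t = (1 - θ) * p := by have h := hp0.ne'; rw [ht0]; field_simp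
  have e2 : p₁ * (1 - t) = θ * p := by have h := hp1.ne'; rw [ht1]; field_simp
  have e3 : p * t + p * (1 - t) = p := by ring
  have hlp : (0:ℝ) ≤ l ^ p := Real.rpow_nonneg hl.le p
  calc (l * u ^ (1 - θ) * v ^ θ) ^ p
      = l ^ p * u ^ ((1 - θ) * p) * v ^ (θ * p) := by
        rw [Real.mul_rpow (mul_nonneg hl.le (Real.rpow_nonneg hu _)) (Real.rpow_nonneg hv _),
          Real.mul_rpow hl.le (Real.rpow_nonneg hu _),
          ← Real.rpow_mul hu, ← Real.rpow_mul hv]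
    _ = (l ^ p * u ^ p₀) ^ t * (l ^ p * v ^ p₁) ^ (1 - t) := by
        rw [Real.mul_rpow hlp (Real.rpow_nonneg hu _), Real.mul_rpow hlp (Real.rpow_nonneg hv _),
          ← Real.rpow_mul hl.le, ← Real.rpow_mul hl.le, ← Real.rpow_mul hu, ← Real.rpow_mul hv,
          e1, e2, ← e3, Real.rpow_add hl]
        ring_nf

theorem key (E F : IdealSpace μ) (p₀ p₁ p K₀ K₁ θ : ℝ)
    (hp₀ : 1 ≤ p₀) (hp₁ : 1 ≤ p₁) (hK₀ : 1 ≤ K₀) (hK₁ : 1 ≤ K₁)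
    (hθ : 0 < θ) (hθ1 : θ < 1) (hp : 1 / p = (1 - θ) / p₀ + θ / p₁)
    (hE : PConvexOn E.carrier E.norm p₀ K₀) (hF : PConvexOn F.carrier F.norm p₁ K₁)
    (n : ℕ) (hn : n ≠ 0) (z : Fin n → α → ℝ) (lam : Fin n → ℝ)
    (x y : Fin n → α → ℝ)
    (hlam : ∀ k, 0 < lam k)
    (hx : ∀ k, x k ∈ E.carrier) (hxn : ∀ k, E.norm (x k) ≤ 1)
    (hy : ∀ k, y k ∈ F.carrier) (hyn : ∀ k, F.norm (y k) ≤ 1)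
    (hbd : ∀ k, ∀ᵐ a ∂μ, |z k a| ≤ lam k * |x k a| ^ (1 - θ) * |y k a| ^ θ) :
    ∃ X' ∈ E.carrier, ∃ Y' ∈ F.carrier, E.norm X' ≤ 1 ∧ F.norm Y' ≤ 1 ∧
      ∀ᵐ a ∂μ, |(∑ k, |z k a| ^ p) ^ (1 / p)| ≤
        (K₀ ^ (1 - θ) * K₁ ^ θ * (∑ k, lam k ^ p) ^ (1 / p)) * |X' a| ^ (1 - θ) * |Y' a| ^ θ := by
  have hθ' : (0:ℝ) < 1 - θ := by linarith
  have hp0 : (0:ℝ) < p₀ := by linarith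
  have hp1 : (0:ℝ) < p₁ := by linarith
  have hpinv : (0:ℝ) < 1 / p := by
    rw [hp]; positivity
  have hppos : (0:ℝ) < p := one_div_pos.mp hpinv
  -- exponent t for pointwise Hölder
  set t : ℝ := (1 - θ) * p / p₀ with ht_def
  have ht : 0 < t := by positivity
  have ht1' : 1 - t = θ * p / p₁ := by
    have : t + θ * p / p₁ = p * (1/p) := by rw [hp]; ring
    rw [mul_one_div_cancel hppos.ne'] at this
    linarith
  have ht1 : t < 1 := by
    have : 0 < θ * p / p₁ := by positivity
    linarith
  -- weights
  haveI : Nonempty (Fin n) := ⟨⟨0, Nat.pos_of_ne_zero hn⟩⟩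
  set L : ℝ := (∑ k, lam k ^ p) ^ (1 / p) with hL_def
  have hsumpos : 0 < ∑ k : Fin n, lam k ^ p :=
    Finset.sum_pos (fun k _ => Real.rpow_pos_of_pos (hlam k) p) Finset.univ_nonempty
  have hL : 0 < L := Real.rpow_pos_of_pos hsumpos _
  set c₀ : Fin n → ℝ := fun k => lam k ^ (p / p₀) with hc₀
  set c₁ : Fin n → ℝ := fun k => lam k ^ (p / p₁) with hc₁
  have hc₀pos : ∀ k, 0 < c₀ k := fun k => Real.rpow_pos_of_pos (hlam k) _
  have hc₁pos : ∀ k, 0 < c₁ k := fun k => Real.rpow_pos_of_pos (hlam k) _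
  have hc₀p : ∀ k, c₀ k ^ p₀ = lam k ^ p := by
    intro k
    rw [hc₀, ← Real.rpow_mul (hlam k).le, div_mul_cancel₀ _ hp0.ne']
  have hc₁p : ∀ k, c₁ k ^ p₁ = lam k ^ p := by
    intro k
    rw [hc₁, ← Real.rpow_mul (hlam k).le, div_mul_cancel₀ _ hp1.ne']
  -- apply p₀-convexity of E
  obtain ⟨hXmem, hXnorm⟩ := hE n (fun k => c₀ k • x k) (fun k => E.smul_mem _ (hx k))
  obtain ⟨hYmem, hYnorm⟩ := hF n (fun k => c₁ k • y k) (fun k => F.smul_mem _ (hy k))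
  set X : α → ℝ := fun a => (∑ k, |(c₀ k • x k) a| ^ p₀) ^ (1 / p₀) with hX_def
  set Y : α → ℝ := fun a => (∑ k, |(c₁ k • y k) a| ^ p₁) ^ (1 / p₁) with hY_def
  set M₀ : ℝ := K₀ * L ^ (p / p₀) with hM₀
  set M₁ : ℝ := K₁ * L ^ (p / p₁) with hM₁
  have hM₀pos : 0 < M₀ := mul_pos (by linarith) (Real.rpow_pos_of_pos hL _)
  have hM₁pos : 0 < M₁ := mul_pos (by linarith) (Real.rpow_pos_of_pos hL _)
  have hLp : ∀ q : ℝ, 0 < q → L ^ (p / q) = (∑ k : Fin n, lam k ^ p) ^ (1/q) := by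
    intro q hq
    rw [hL_def, ← Real.rpow_mul hsumpos.le]
    congr 1
    field_simp
  have hXN : E.norm X ≤ M₀ := by
    refine hXnorm.trans ?_
    rw [hM₀, hLp p₀ hp0]
    refine mul_le_mul_of_nonneg_left ?_ (by linarith)
    refine Real.rpow_le_rpow (Finset.sum_nonneg fun k _ => Real.rpow_nonneg (E.norm_nonneg _) _)
      (Finset.sum_le_sum fun k _ => ?_) (div_nonneg zero_le_one hp0.le)
    rw [E.norm_smul, abs_of_pos (hc₀pos k), ← hc₀p k]
    calc (c₀ k * E.norm (x k)) ^ p₀ ≤ (c₀ k * 1) ^ p₀ := by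
          refine Real.rpow_le_rpow (mul_nonneg (hc₀pos k).le (E.norm_nonneg _)) ?_ hp0.le
          exact mul_le_mul_of_nonneg_left (hxn k) (hc₀pos k).le
      _ = c₀ k ^ p₀ := by rw [mul_one]
  have hYN : F.norm Y ≤ M₁ := by
    refine hYnorm.trans ?_
    rw [hM₁, hLp p₁ hp1]
    refine mul_le_mul_of_nonneg_left ?_ (by linarith)
    refine Real.rpow_le_rpow (Finset.sum_nonneg fun k _ => Real.rpow_nonneg (F.norm_nonneg _) _)
      (Finset.sum_le_sum fun k _ => ?_) (div_nonneg zero_le_one hp1.le)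
    rw [F.norm_smul, abs_of_pos (hc₁pos k), ← hc₁p k]
    calc (c₁ k * F.norm (y k)) ^ p₁ ≤ (c₁ k * 1) ^ p₁ := by
          refine Real.rpow_le_rpow (mul_nonneg (hc₁pos k).le (F.norm_nonneg _)) ?_ hp1.le
          exact mul_le_mul_of_nonneg_left (hyn k) (hc₁pos k).le
      _ = c₁ k ^ p₁ := by rw [mul_one]
  refine ⟨M₀⁻¹ • X, E.smul_mem _ hXmem, M₁⁻¹ • Y, F.smul_mem _ hYmem, ?_, ?_, ?_⟩
  · rw [E.norm_smul, abs_of_pos (inv_pos.mpr hM₀pos)]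
    exact (inv_mul_le_iff₀ hM₀pos).mpr (by rw [mul_one]; exact hXN)
  · rw [F.norm_smul, abs_of_pos (inv_pos.mpr hM₁pos)]
    exact (inv_mul_le_iff₀ hM₁pos).mpr (by rw [mul_one]; exact hYN)
  · -- the a.e. pointwise bound
    have hae : ∀ᵐ a ∂μ, ∀ k, |z k a| ≤ lam k * |x k a| ^ (1 - θ) * |y k a| ^ θ :=
      (ae_all_iff).mpr hbd
    filter_upwards [hae] with a ha
    have hXa : 0 ≤ X a := Real.rpow_nonneg
      (Finset.sum_nonneg fun k _ => Real.rpow_nonneg (abs_nonneg _) _) _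
    have hYa : 0 ≤ Y a := Real.rpow_nonneg
      (Finset.sum_nonneg fun k _ => Real.rpow_nonneg (abs_nonneg _) _) _
    -- Step 1+2: sum bound
    have step1 : ∑ k, |z k a| ^ p ≤
        (∑ k, lam k ^ p * |x k a| ^ p₀) ^ t * (∑ k, lam k ^ p * |y k a| ^ p₁) ^ (1 - t) := by
      refine le_trans (Finset.sum_le_sum (fun k _ => ?_)) (holder_interp _ _ _
        (fun k => mul_nonneg (Real.rpow_nonneg (hlam k).le _) (Real.rpow_nonneg (abs_nonneg _) _))
        (fun k => mul_nonneg (Real.rpow_nonneg (hlam k).le _) (Real.rpow_nonneg (abs_nonneg _) _))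
        ht ht1)
      rw [← alg1 hp0 hp1 ht_def ht1' (hlam k) (abs_nonneg _) (abs_nonneg _)]
      exact Real.rpow_le_rpow (abs_nonneg _) (ha k) hppos.le
    -- identify X a and Y a
    have hXa_eq : X a ^ p₀ = ∑ k, lam k ^ p * |x k a| ^ p₀ := by
      rw [hX_def]
      rw [← Real.rpow_mul (Finset.sum_nonneg fun k _ => Real.rpow_nonneg (abs_nonneg _) _),
        one_div, inv_mul_cancel₀ hp0.ne', Real.rpow_one]
      refine Finset.sum_congr rfl fun k _ => ?_
      rw [Pi.smul_apply, smul_eq_mul, abs_mul, abs_of_pos (hc₀pos k),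
        Real.mul_rpow (hc₀pos k).le (abs_nonneg _), hc₀p k]
    have hYa_eq : Y a ^ p₁ = ∑ k, lam k ^ p * |y k a| ^ p₁ := by
      rw [hY_def]
      rw [← Real.rpow_mul (Finset.sum_nonneg fun k _ => Real.rpow_nonneg (abs_nonneg _) _),
        one_div, inv_mul_cancel₀ hp1.ne', Real.rpow_one]
      refine Finset.sum_congr rfl fun k _ => ?_
      rw [Pi.smul_apply, smul_eq_mul, abs_mul, abs_of_pos (hc₁pos k),
        Real.mul_rpow (hc₁pos k).le (abs_nonneg _), hc₁p k]
    -- Step 3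
    have step3 : (∑ k, |z k a| ^ p) ^ (1/p) ≤ X a ^ (1 - θ) * Y a ^ θ := by
      have ex1 : p₀ * t * (1/p) = 1 - θ := by
        have h0 := hp0.ne'; have hpp := hppos.ne'
        rw [ht_def]; field_simp
      have ex2 : p₁ * (1 - t) * (1/p) = θ := by
        have h1 := hp1.ne'; have hpp := hppos.ne'
        rw [ht1']; field_simp
      have h1 : ((X a ^ p₀) ^ t * (Y a ^ p₁) ^ (1 - t)) ^ (1/p)
          = X a ^ (1 - θ) * Y a ^ θ := by
        rw [Real.mul_rpow (Real.rpow_nonneg (Real.rpow_nonneg hXa _) _)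
          (Real.rpow_nonneg (Real.rpow_nonneg hYa _) _),
          ← Real.rpow_mul hXa, ← Real.rpow_mul hYa,
          ← Real.rpow_mul hXa, ← Real.rpow_mul hYa, ex1, ex2]
      rw [← h1, hXa_eq, hYa_eq]
      exact Real.rpow_le_rpow (Finset.sum_nonneg fun k _ => Real.rpow_nonneg (abs_nonneg _) _)
        step1 hpinv.le
    -- Step 4: conclude
    have hX'a : (M₀⁻¹ • X) a = M₀⁻¹ * X a := rfl
    have hY'a : (M₁⁻¹ • Y) a = M₁⁻¹ * Y a := rfl
    have habs : |(∑ k, |z k a| ^ p) ^ (1/p)| = (∑ k, |z k a| ^ p) ^ (1/p) :=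
      abs_of_nonneg (Real.rpow_nonneg (Finset.sum_nonneg fun k _ =>
        Real.rpow_nonneg (abs_nonneg _) _) _)
    rw [habs, hX'a, hY'a, abs_mul, abs_mul, abs_of_pos (inv_pos.mpr hM₀pos),
      abs_of_pos (inv_pos.mpr hM₁pos), abs_of_nonneg hXa, abs_of_nonneg hYa]
    refine step3.trans (le_of_eq ?_)
    have lexp : L ^ (p / p₀ * (1 - θ)) * L ^ (p / p₁ * θ) = L := by
      rw [← Real.rpow_add hL,
        show p / p₀ * (1 - θ) + p / p₁ * θ = p * (1/p) by rw [hp]; ring,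
        mul_one_div_cancel hppos.ne', Real.rpow_one]
    have hKL : M₀ ^ (1 - θ) * M₁ ^ θ = K₀ ^ (1 - θ) * K₁ ^ θ * L := by
      rw [hM₀, hM₁, Real.mul_rpow (by linarith) (Real.rpow_nonneg hL.le _),
        Real.mul_rpow (by linarith) (Real.rpow_nonneg hL.le _),
        ← Real.rpow_mul hL.le, ← Real.rpow_mul hL.le, mul_mul_mul_comm, lexp]
    rw [← hKL,
      Real.mul_rpow (inv_pos.mpr hM₀pos).le hXa, Real.mul_rpow (inv_pos.mpr hM₁pos).le hYa]
    have m0 : M₀ ^ (1 - θ) * M₀⁻¹ ^ (1 - θ) = 1 := by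
      rw [← Real.mul_rpow hM₀pos.le (inv_nonneg.mpr hM₀pos.le), mul_inv_cancel₀ hM₀pos.ne',
        Real.one_rpow]
    have m1 : M₁ ^ θ * M₁⁻¹ ^ θ = 1 := by
      rw [← Real.mul_rpow hM₁pos.le (inv_nonneg.mpr hM₁pos.le), mul_inv_cancel₀ hM₁pos.ne',
        Real.one_rpow]
    calc X a ^ (1 - θ) * Y a ^ θ
        = (M₀ ^ (1 - θ) * M₀⁻¹ ^ (1 - θ)) * (M₁ ^ θ * M₁⁻¹ ^ θ) * (X a ^ (1 - θ) * Y a ^ θ) := by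
          rw [m0, m1]; ring
      _ = M₀ ^ (1 - θ) * M₁ ^ θ * (M₀⁻¹ ^ (1 - θ) * X a ^ (1 - θ)) * (M₁⁻¹ ^ θ * Y a ^ θ) := by
          ring

/-- Lemma 2: if E is p₀-convex with constant K₀ and F is p₁-convex with constant K₁,
then the Calderón space E^{1-θ}F^θ is p-convex with constant at most K₀^{1-θ}K₁^θ,
where 1/p = (1-θ)/p₀ + θ/p₁. -/
theorem calderon_p_convex (E F : IdealSpace μ) (p₀ p₁ p K₀ K₁ θ : ℝ)
    (hp₀ : 1 ≤ p₀) (hp₁ : 1 ≤ p₁) (hK₀ : 1 ≤ K₀) (hK₁ : 1 ≤ K₁)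
    (hθ : 0 < θ) (hθ1 : θ < 1) (hp : 1 / p = (1 - θ) / p₀ + θ / p₁)
    (hE : PConvexOn E.carrier E.norm p₀ K₀) (hF : PConvexOn F.carrier F.norm p₁ K₁) :
    PConvexOn (caldSet (1 - θ) E F) (caldNorm (1 - θ) E F) p (K₀ ^ (1 - θ) * K₁ ^ θ) := by
  have hθ' : (0:ℝ) < 1 - θ := by linarith
  have hp0 : (0:ℝ) < p₀ := by linarith
  have hp1 : (0:ℝ) < p₁ := by linarith
  have hK₀0 : (0:ℝ) < K₀ := by linarith
  have hK₁0 : (0:ℝ) < K₁ := by linarith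
  have hpinv : (0:ℝ) < 1 / p := by rw [hp]; positivity
  have hppos : (0:ℝ) < p := one_div_pos.mp hpinv
  have hKpos : (0:ℝ) < K₀ ^ (1 - θ) * K₁ ^ θ :=
    mul_pos (Real.rpow_pos_of_pos hK₀0 _) (Real.rpow_pos_of_pos hK₁0 _)
  have hE0 : E.norm 0 = 0 := by simpa using E.norm_smul 0 0
  have hF0 : F.norm 0 = 0 := by simpa using F.norm_smul 0 0
  have hbdd : ∀ w : α → ℝ, BddBelow {lam | 0 < lam ∧ ∃ x ∈ E.carrier, ∃ y ∈ F.carrier,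
      E.norm x ≤ 1 ∧ F.norm y ≤ 1 ∧
      ∀ᵐ a ∂μ, |w a| ≤ lam * |x a| ^ (1 - θ) * |y a| ^ (1 - (1 - θ))} :=
    fun w => ⟨0, fun l hl => hl.1.le⟩
  intro n z hz
  by_cases hn : n = 0
  · subst hn
    have hbig : (fun a => (∑ k : Fin 0, |z k a| ^ p) ^ (1/p)) = fun _ : α => (0:ℝ) := by
      funext a
      simp [Real.zero_rpow (one_div_ne_zero hppos.ne'), Real.zero_rpow (inv_ne_zero hppos.ne')]
    constructor
    · show _ ∈ caldSet (1 - θ) E F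
      rw [hbig]
      exact ⟨1, one_pos, 0, E.zero_mem, 0, F.zero_mem, by rw [hE0]; exact zero_le_one,
        by rw [hF0]; exact zero_le_one,
        Filter.Eventually.of_forall fun a => by
          simp [sub_sub_cancel, Real.zero_rpow hθ'.ne', Real.zero_rpow hθ.ne']⟩
    · have hsum0 : (∑ k : Fin 0, caldNorm (1 - θ) E F (z k) ^ p) ^ (1/p) = 0 := by
        simp [Real.zero_rpow (one_div_ne_zero hppos.ne'), Real.zero_rpow (inv_ne_zero hppos.ne')]
      rw [hsum0, mul_zero]
      have hle : ∀ ε > (0:ℝ), caldNorm (1 - θ) E F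
          (fun a => (∑ k : Fin 0, |z k a| ^ p) ^ (1/p)) ≤ ε := by
        intro ε hε
        refine csInf_le (hbdd _) ?_
        refine ⟨hε, 0, E.zero_mem, 0, F.zero_mem, by rw [hE0]; exact zero_le_one,
          by rw [hF0]; exact zero_le_one, Filter.Eventually.of_forall fun a => ?_⟩
        rw [hbig]
        simp [sub_sub_cancel, Real.zero_rpow hθ'.ne', Real.zero_rpow hθ.ne']
      have := le_of_forall_pos_le_add (a := caldNorm (1 - θ) E F
        (fun a => (∑ k : Fin 0, |z k a| ^ p) ^ (1/p))) (b := 0)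
        (fun ε hε => by simpa using hle ε hε)
      exact this
  · -- extract data from membership
    simp only [caldSet, Set.mem_setOf_eq] at hz
    haveI : Nonempty (Fin n) := ⟨⟨0, Nat.pos_of_ne_zero hn⟩⟩
    constructor
    · -- membership
      obtain ⟨lam, hlam, x, hx, y, hy, hxn, hyn, hbd⟩ :
          ∃ lam : Fin n → ℝ, (∀ k, 0 < lam k) ∧ ∃ x : Fin n → α → ℝ, (∀ k, x k ∈ E.carrier) ∧
          ∃ y : Fin n → α → ℝ, (∀ k, y k ∈ F.carrier) ∧ (∀ k, E.norm (x k) ≤ 1) ∧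
          (∀ k, F.norm (y k) ≤ 1) ∧
          ∀ k, ∀ᵐ a ∂μ, |z k a| ≤ lam k * |x k a| ^ (1 - θ) * |y k a| ^ θ := by
        choose lam hlam x hx y hy hxn hyn hbd using hz
        exact ⟨lam, hlam, x, hx, y, hy, hxn, hyn, fun k => by
          simpa only [sub_sub_cancel] using hbd k⟩
      obtain ⟨X', hX', Y', hY', h1, h2, hae⟩ := key E F p₀ p₁ p K₀ K₁ θ hp₀ hp₁ hK₀ hK₁
        hθ hθ1 hp hE hF n hn z lam x y hlam hx hxn hy hyn hbd
      have hsumpos : 0 < ∑ k : Fin n, lam k ^ p :=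
        Finset.sum_pos (fun k _ => Real.rpow_pos_of_pos (hlam k) p) Finset.univ_nonempty
      exact ⟨K₀ ^ (1 - θ) * K₁ ^ θ * (∑ k, lam k ^ p) ^ (1/p),
        mul_pos hKpos (Real.rpow_pos_of_pos hsumpos _), X', hX', Y', hY', h1, h2,
        by simpa only [sub_sub_cancel] using hae⟩
    · -- norm estimate
      set N : (α → ℝ) → ℝ := caldNorm (1 - θ) E F with hN
      have hmain : ∀ ε > (0:ℝ), N (fun a => (∑ k, |z k a| ^ p) ^ (1/p)) ≤
          K₀ ^ (1 - θ) * K₁ ^ θ * (∑ k, (N (z k) + ε) ^ p) ^ (1/p) := by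
        intro ε hε
        have hexists : ∀ k : Fin n, ∃ l ∈ {lam | 0 < lam ∧ ∃ x ∈ E.carrier, ∃ y ∈ F.carrier,
            E.norm x ≤ 1 ∧ F.norm y ≤ 1 ∧ ∀ᵐ a ∂μ, |z k a| ≤
              lam * |x a| ^ (1 - θ) * |y a| ^ (1 - (1 - θ))}, l < N (z k) + ε := by
          intro k
          refine exists_lt_of_csInf_lt ?_ ?_
          · obtain ⟨lam, hlam, hrest⟩ := hz k
            exact ⟨lam, hlam, hrest⟩
          · have : N (z k) = sInf _ := rfl
            linarith [hε]
        choose lam hmem hlt using hexists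
        have hlam : ∀ k, 0 < lam k := fun k => (hmem k).1
        obtain ⟨x, hx, y, hy, hxn, hyn, hbd⟩ :
            ∃ x : Fin n → α → ℝ, (∀ k, x k ∈ E.carrier) ∧
            ∃ y : Fin n → α → ℝ, (∀ k, y k ∈ F.carrier) ∧ (∀ k, E.norm (x k) ≤ 1) ∧
            (∀ k, F.norm (y k) ≤ 1) ∧
            ∀ k, ∀ᵐ a ∂μ, |z k a| ≤ lam k * |x k a| ^ (1 - θ) * |y k a| ^ θ := by
          have := fun k => (hmem k).2
          choose x hx y hy hxn hyn hbd using this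
          exact ⟨x, hx, y, hy, hxn, hyn, fun k => by
            simpa only [sub_sub_cancel] using hbd k⟩
        obtain ⟨X', hX', Y', hY', h1, h2, hae⟩ := key E F p₀ p₁ p K₀ K₁ θ hp₀ hp₁ hK₀ hK₁
          hθ hθ1 hp hE hF n hn z lam x y hlam hx hxn hy hyn hbd
        have step : N (fun a => (∑ k, |z k a| ^ p) ^ (1/p)) ≤
            K₀ ^ (1 - θ) * K₁ ^ θ * (∑ k, lam k ^ p) ^ (1/p) := by
          refine csInf_le (hbdd _) ?_
          have hsumpos : 0 < ∑ k : Fin n, lam k ^ p :=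
            Finset.sum_pos (fun k _ => Real.rpow_pos_of_pos (hlam k) p) Finset.univ_nonempty
          exact ⟨mul_pos hKpos (Real.rpow_pos_of_pos hsumpos _), X', hX', Y', hY', h1, h2,
            by simpa only [sub_sub_cancel] using hae⟩
        refine step.trans (mul_le_mul_of_nonneg_left ?_ hKpos.le)
        refine Real.rpow_le_rpow (Finset.sum_nonneg fun k _ =>
          Real.rpow_nonneg (hlam k).le _) (Finset.sum_le_sum fun k _ => ?_) hpinv.le
        exact Real.rpow_le_rpow (hlam k).le (hlt k).le hppos.le
      -- pass to the limit ε → 0⁺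
      have hcont : Continuous (fun ε : ℝ =>
          K₀ ^ (1 - θ) * K₁ ^ θ * (∑ k, (N (z k) + ε) ^ p) ^ (1/p)) := by
        refine continuous_const.mul ?_
        refine Continuous.rpow_const ?_ (fun _ => Or.inr hpinv.le)
        refine continuous_finset_sum _ fun k _ => ?_
        exact (continuous_const.add continuous_id).rpow_const (fun _ => Or.inr hppos.le)
      have hf0 : K₀ ^ (1 - θ) * K₁ ^ θ * (∑ k, (N (z k) + (0:ℝ)) ^ p) ^ (1/p)
          = K₀ ^ (1 - θ) * K₁ ^ θ * (∑ k, N (z k) ^ p) ^ (1/p) := by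
        simp
      have htend : Filter.Tendsto (fun ε : ℝ =>
          K₀ ^ (1 - θ) * K₁ ^ θ * (∑ k, (N (z k) + ε) ^ p) ^ (1/p))
          (nhdsWithin 0 (Set.Ioi 0))
          (nhds (K₀ ^ (1 - θ) * K₁ ^ θ * (∑ k, N (z k) ^ p) ^ (1/p))) := by
        have := (hcont.continuousAt (x := (0:ℝ))).continuousWithinAt
          (s := Set.Ioi (0:ℝ))
        rw [ContinuousWithinAt, hf0] at this
        exact this
      refine ge_of_tendsto htend ?_
      exact Filter.eventually_of_mem self_mem_nhdsWithin fun ε hε => hmain ε hε
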